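/- Let f : ℝ → ℝ be continuous with compact support, let x ∈ ℝ, and let g(u) = 1/(i-u) + χ_{|u|>1}·(1/u). Then ∫_ℝ (f(x+εu) - f(x))·g(u) du → 0 as ε → 0⁺. -/

import Mathlib

open MeasureTheory Complex Set Filter Topology

noncomputable def gfun : ℝ → ℂ := fun u =>
  1 / (Complex.I - u) + Set.indicator {u : ℝ | 1 < |u|} (fun u : ℝ => (1 : ℂ) / u) u

lemma I_sub_ne (u : ℝ) : Complex.I - (u : ℂ) ≠ 0 := by
  intro h
  have := congrArg Complex.im h
  simp at this

lemma norm_I_sub_ge_one (u : ℝ) : 1 ≤ ‖Complex.I - u‖ := by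
  have := Complex.abs_im_le_norm (Complex.I - u)
  simpa using this

lemma norm_I_sub_ge_abs (u : ℝ) : |u| ≤ ‖Complex.I - u‖ := by
  have := Complex.abs_re_le_norm (Complex.I - u)
  simpa using this

lemma gfun_bound (u : ℝ) : ‖gfun u‖ ≤ 2 / (1 + u ^ 2) := by
  have hpos : (0:ℝ) < 1 + u ^ 2 := by positivity
  by_cases h : 1 < |u|
  · have hu : (u : ℂ) ≠ 0 := by
      intro hu0
      have : u = 0 := by exact_mod_cast hu0
      rw [this] at h; norm_num at h
    have heq : gfun u = Complex.I / ((Complex.I - u) * u) := by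
      simp only [gfun, Set.indicator_of_mem (show u ∈ {u : ℝ | 1 < |u|} from h)]
      rw [div_add_div _ _ (I_sub_ne u) hu]
      congr 1
      ring
    rw [heq]
    have h1 : ‖Complex.I / ((Complex.I - u) * u)‖ = 1 / (‖Complex.I - u‖ * |u|) := by
      simp [map_div₀, map_mul, Complex.norm_real]
    rw [h1]
    have habs : |u| * |u| ≤ ‖Complex.I - u‖ * |u| :=
      mul_le_mul_of_nonneg_right (norm_I_sub_ge_abs u) (abs_nonneg u)
    have hsq : 1 + u ^ 2 ≤ 2 * (|u| * |u|) := by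
      have h1sq : 1 ≤ u ^ 2 := (one_le_sq_iff_one_le_abs u).mpr h.le
      nlinarith [_root_.sq_abs u]
    have hp : (0:ℝ) < |u| * |u| := by nlinarith [abs_nonneg u]
    rw [div_le_div_iff₀ (by nlinarith) hpos]
    nlinarith
  · push_neg at h
    have heq : gfun u = 1 / (Complex.I - u) := by
      simp only [gfun, Set.indicator_of_notMem (show u ∉ {u : ℝ | 1 < |u|} by simpa using h)]
      ring
    rw [heq]
    have h1 : ‖(1:ℂ) / (Complex.I - u)‖ = 1 / ‖Complex.I - u‖ := by
      simp [map_div₀]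
    rw [h1]
    have h2 : (1:ℝ) / ‖Complex.I - u‖ ≤ 1 := by
      rw [div_le_one (lt_of_lt_of_le one_pos (norm_I_sub_ge_one u))]
      exact norm_I_sub_ge_one u
    have h3 : (1:ℝ) ≤ 2 / (1 + u ^ 2) := by
      rw [le_div_iff₀ hpos]
      nlinarith [_root_.sq_abs u, abs_nonneg u]
    linarith

lemma gfun_meas : Measurable gfun := by
  have h1 : Measurable fun u : ℝ => (1:ℂ) / (Complex.I - u) :=
    measurable_const.div ((measurable_const.sub Complex.measurable_ofReal))
  have h2 : Measurable fun u : ℝ => Set.indicator {u : ℝ | 1 < |u|} (fun u : ℝ => (1 : ℂ) / u) u := by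
    apply Measurable.indicator
    · exact measurable_const.div Complex.measurable_ofReal
    · exact measurableSet_lt measurable_const measurable_abs
  exact h1.add h2

lemma gfun_integrable : Integrable gfun := by
  have h1 : Integrable (fun u : ℝ => 2 / (1 + u ^ 2)) := by
    simpa [div_eq_mul_inv] using integrable_inv_one_add_sq.const_mul 2
  exact (h1.mono' gfun_meas.aestronglyMeasurable
    (Filter.Eventually.of_forall fun u => gfun_bound u))

theorem integral_translate_diff_mul_g_tendsto_zero
    (f : ℝ → ℝ) (hf : Continuous f) (hsupp : HasCompactSupport f) (x : ℝ) :
    Filter.Tendsto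
      (fun ε : ℝ => ∫ u : ℝ,
        ((f (x + ε * u) - f x : ℝ) : ℂ) *
          (1 / (Complex.I - u) +
            Set.indicator {u : ℝ | 1 < |u|} (fun u : ℝ => (1 : ℂ) / u) u))
      (nhdsWithin 0 (Set.Ioi 0)) (nhds 0) := by
  obtain ⟨C, hC⟩ := hsupp.exists_bound_of_continuous hf
  have hC0 : 0 ≤ C := le_trans (norm_nonneg _) (hC 0)
  have key : Filter.Tendsto
      (fun ε : ℝ => ∫ u : ℝ, ((f (x + ε * u) - f x : ℝ) : ℂ) * gfun u)
      (nhdsWithin 0 (Set.Ioi 0)) (nhds (∫ _ : ℝ, (0 : ℂ))) := by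
    apply MeasureTheory.tendsto_integral_filter_of_dominated_convergence
      (bound := fun u => 2 * C * ‖gfun u‖)
    · filter_upwards with ε
      exact ((Complex.continuous_ofReal.comp
        (((hf.comp (continuous_const.add (continuous_const.mul continuous_id)))).sub
          continuous_const)).measurable.mul gfun_meas).aestronglyMeasurable
    · filter_upwards with ε
      filter_upwards with u
      rw [norm_mul]
      apply mul_le_mul_of_nonneg_right _ (norm_nonneg _)
      rw [Complex.norm_real]
      have := hC (x + ε * u)
      have := hC x
      rw [Real.norm_eq_abs] at *
      have := abs_sub (f (x + ε * u)) (f x)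
      calc |f (x + ε * u) - f x| ≤ |f (x + ε * u)| + |f x| := abs_sub _ _
        _ ≤ 2 * C := by linarith
    · exact gfun_integrable.norm.const_mul (2 * C)
    · filter_upwards with u
      have hcont : Continuous fun ε : ℝ => ((f (x + ε * u) - f x : ℝ) : ℂ) :=
        Complex.continuous_ofReal.comp
          (((hf.comp (continuous_const.add (continuous_id.mul continuous_const)))).sub
            continuous_const)
      have h1 : Filter.Tendsto (fun ε : ℝ => ((f (x + ε * u) - f x : ℝ) : ℂ))
          (nhds 0) (nhds 0) := by
        have := hcont.tendsto 0
        simpa using this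
      have h0 : Filter.Tendsto (fun ε : ℝ => ((f (x + ε * u) - f x : ℝ) : ℂ))
          (nhdsWithin 0 (Set.Ioi 0)) (nhds 0) := h1.mono_left nhdsWithin_le_nhds
      simpa using h0.mul_const (gfun u)
  simpa [gfun] using key
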